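/- Let $\theta > 0$, $\mathbf{v} \in \mathbb{R}^d$, and let $f : \mathbb{R}^d \to [0,\infty)$ be measurable. Suppose there exist constants $R > 0$, $r > 0$ and a tail temperature $\theta^{(\mathrm{tail})} \ge 2\theta$ such that $f(\mathbf{c}) \ge R \exp\!\big(-\tfrac{|\mathbf{c}|^2}{2\theta^{(\mathrm{tail})}}\big)$ for all $\|\mathbf{c}\| > r$. Then $\int_{\mathbb{R}^d} f(\mathbf{c})^2 \exp\!\big(\tfrac{|\mathbf{c}-\mathbf{v}|^2}{2\theta}\big)\,d\mathbf{c} = \infty$. In particular, such an $f$ does not belong to the weighted space $V_\omega$ with weight $\omega(\mathbf{c}) = f_{\mathrm{eq}}(\mathbf{c})^{-1}$, where $f_{\mathrm{eq}}$ is any Maxwellian with velocity $\mathbf{v}$ and temperature $\theta$, so the Grad expansion of $f$ cannot converge. -/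

import Mathlib

open MeasureTheory

/-- **Divergence of the Grad expansion for hot tails.** If a nonnegative measurable
distribution `f` on `ℝ^d` (`d ≥ 1`) is bounded below on `‖c‖ > r` by a Gaussian with tail
temperature `θ_tail ≥ 2θ`, then `∫ f² exp(|c-v|²/(2θ)) dc = ∞`; in particular `f` is not in
the weighted space `V_ω` for the weight `ω = f_eq⁻¹` of any Maxwellian with velocity `v` and
temperature `θ`, so the Grad expansion of `f` cannot converge. -/
theorem grad_expansion_diverges_of_hot_tail
    (d : ℕ) (hd : 0 < d) (θ θtail : ℝ) (hθ : 0 < θ) (v : Fin d → ℝ)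
    (f : (Fin d → ℝ) → ℝ) (hf_meas : Measurable f) (hf_nonneg : ∀ c, 0 ≤ f c)
    (R r : ℝ) (hR : 0 < R) (hr : 0 < r) (htail : 2 * θ ≤ θtail)
    (hlb : ∀ c : Fin d → ℝ, r < Real.sqrt (∑ i, c i ^ 2) →
        R * Real.exp (-(∑ i, c i ^ 2) / (2 * θtail)) ≤ f c) :
    (∫⁻ c : Fin d → ℝ,
        ENNReal.ofReal (f c ^ 2 * Real.exp ((∑ i, (c i - v i) ^ 2) / (2 * θ)))) = ⊤ ∧
    ∀ ρ : ℝ, 0 < ρ →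
      ¬ MemLp f 2 (volume.withDensity fun c : Fin d → ℝ =>
          ENNReal.ofReal (ρ / (2 * Real.pi * θ) ^ ((d : ℝ) / 2) *
            Real.exp (-(∑ i, (c i - v i) ^ 2) / (2 * θ)))⁻¹) := by
  have hθtail : 0 < θtail := lt_of_lt_of_le (by linarith) htail
  set M : ℝ := r + 1 with hMdef
  have hMpos : (0:ℝ) < M := by rw [hMdef]; linarith
  set S : Set (Fin d → ℝ) :=
    Set.univ.pi fun i => if 0 ≤ v i then Set.Iic (-M) else Set.Ici M with hSdef
  have hSvol : volume S = ⊤ := by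
    rw [hSdef, volume_pi_pi]
    have h1 : ∀ i : Fin d,
        volume (if 0 ≤ v i then Set.Iic (-M) else Set.Ici M) = (⊤ : ENNReal) := by
      intro i; split <;> simp
    simp only [h1, Finset.prod_const, Finset.card_univ, Fintype.card_fin]
    exact ENNReal.top_pow hd.ne'
  -- measurability of the integrand
  have hQmeas : Measurable fun c : Fin d → ℝ => ∑ i, (c i - v i) ^ 2 :=
    Finset.measurable_sum _ fun i _ =>
      ((measurable_pi_apply i).sub measurable_const).pow_const 2
  have hint_meas : Measurable fun c : Fin d → ℝ =>
      ENNReal.ofReal (f c ^ 2 * Real.exp ((∑ i, (c i - v i) ^ 2) / (2 * θ))) :=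
    ((hf_meas.pow_const 2).mul
      (Real.measurable_exp.comp (hQmeas.div_const _))).ennreal_ofReal
  -- pointwise lower bound on S
  have hpt : ∀ c ∈ S, ENNReal.ofReal (R ^ 2)
      ≤ ENNReal.ofReal (f c ^ 2 * Real.exp ((∑ i, (c i - v i) ^ 2) / (2 * θ))) := by
    intro c hc
    rw [hSdef, Set.mem_univ_pi] at hc
    have hcv : ∀ i, c i * v i ≤ 0 := by
      intro i
      have hci := hc i
      by_cases h : 0 ≤ v i
      · simp only [h, if_true, Set.mem_Iic] at hci
        have hc0 : c i ≤ 0 := le_trans hci (by linarith)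
        exact mul_nonpos_iff.2 (Or.inr ⟨hc0, h⟩)
      · simp only [h, if_false, Set.mem_Ici] at hci
        have hv : v i ≤ 0 := le_of_not_ge h
        have hc0 : 0 ≤ c i := le_trans hMpos.le hci
        exact mul_nonpos_iff.2 (Or.inl ⟨hc0, hv⟩)
    set i0 : Fin d := ⟨0, hd⟩
    have hM0 : M ≤ |c i0| := by
      have hci := hc i0
      by_cases h : 0 ≤ v i0
      · simp only [h, if_true, Set.mem_Iic] at hci
        calc M ≤ -(c i0) := by linarith
        _ ≤ |c i0| := neg_le_abs _
      · simp only [h, if_false, Set.mem_Ici] at hci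
        exact le_trans hci (le_abs_self _)
    set s : ℝ := ∑ i, c i ^ 2 with hsdef
    have hs_nonneg : 0 ≤ s := Finset.sum_nonneg fun i _ => sq_nonneg _
    have hsM : M ^ 2 ≤ s := by
      have h1 : M ^ 2 ≤ c i0 ^ 2 := by
        rw [← sq_abs (c i0)]
        exact pow_le_pow_left₀ hMpos.le hM0 2
      exact le_trans h1 (Finset.single_le_sum (fun i _ => sq_nonneg (c i)) (Finset.mem_univ i0))
    have hrs : r < Real.sqrt s := by
      rw [show r = Real.sqrt (r ^ 2) by rw [Real.sqrt_sq hr.le]]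
      apply Real.sqrt_lt_sqrt (sq_nonneg r)
      have h2 : r ^ 2 < M ^ 2 := by
        apply pow_lt_pow_left₀ _ hr.le (by norm_num)
        rw [hMdef]; linarith
      linarith
    have hflb := hlb c hrs
    -- the quadratic-form inequality : ∑ (cᵢ - vᵢ)² ≥ ∑ cᵢ²
    have hsum_ge : s ≤ ∑ i, (c i - v i) ^ 2 := by
      have hexp : ∑ i, (c i - v i) ^ 2
          = s + ((∑ i, v i ^ 2) - 2 * ∑ i, c i * v i) := by
        rw [hsdef, Finset.mul_sum, ← Finset.sum_sub_distrib, ← Finset.sum_add_distrib]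
        exact Finset.sum_congr rfl fun i _ => by ring
      have hv2 : 0 ≤ ∑ i, v i ^ 2 := Finset.sum_nonneg fun i _ => sq_nonneg _
      have hcv2 : (∑ i, c i * v i) ≤ 0 := Finset.sum_nonpos fun i _ => hcv i
      rw [hexp]; linarith
    set Q : ℝ := (∑ i, (c i - v i) ^ 2) / (2 * θ) with hQdef
    have hexp_nonneg : 0 ≤ -s / θtail + Q := by
      have h1 : s / θtail ≤ s / (2 * θ) := by
        apply div_le_div_of_nonneg_left hs_nonneg (by linarith) htail
      have h2 : s / (2 * θ) ≤ Q := by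
        rw [hQdef]
        gcongr
      have : -s / θtail = -(s / θtail) := by ring
      rw [this]; linarith
    apply ENNReal.ofReal_le_ofReal
    calc R ^ 2 = R ^ 2 * 1 := (mul_one _).symm
      _ ≤ R ^ 2 * Real.exp (-s / θtail + Q) :=
        mul_le_mul_of_nonneg_left (Real.one_le_exp hexp_nonneg) (sq_nonneg R)
      _ = (R * Real.exp (-s / (2 * θtail))) ^ 2 * Real.exp Q := by
        rw [mul_pow, sq (Real.exp _), ← Real.exp_add, mul_assoc, ← Real.exp_add]
        congr 1
        field_simp
        ring
      _ ≤ f c ^ 2 * Real.exp Q := by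
        apply mul_le_mul_of_nonneg_right _ (Real.exp_pos Q).le
        exact pow_le_pow_left₀ (by positivity) hflb 2
  -- the main divergence
  have hSmeas : MeasurableSet S := by
    rw [hSdef]
    apply MeasurableSet.univ_pi
    intro i
    split
    · exact measurableSet_Iic
    · exact measurableSet_Ici
  have hmain : (∫⁻ c : Fin d → ℝ,
      ENNReal.ofReal (f c ^ 2 * Real.exp ((∑ i, (c i - v i) ^ 2) / (2 * θ)))) = ⊤ := by
    refine eq_top_iff.2 ?_
    calc (⊤ : ENNReal) = ENNReal.ofReal (R ^ 2) * volume S := by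
          rw [hSvol, ENNReal.mul_top]
          simp [ENNReal.ofReal_eq_zero, not_le, pow_pos hR, hR.ne']
      _ = ∫⁻ _ in S, ENNReal.ofReal (R ^ 2) := (setLIntegral_const S _).symm
      _ ≤ ∫⁻ c in S, ENNReal.ofReal
            (f c ^ 2 * Real.exp ((∑ i, (c i - v i) ^ 2) / (2 * θ))) :=
        setLIntegral_mono hint_meas hpt
      _ ≤ _ := setLIntegral_le_lintegral S _
  refine ⟨hmain, ?_⟩
  intro ρ hρ hmem
  set A : ℝ := ρ / (2 * Real.pi * θ) ^ ((d : ℝ) / 2) with hAdef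
  have hApos : 0 < A :=
    div_pos hρ (Real.rpow_pos_of_pos (by positivity) _)
  have hw_meas : Measurable fun c : Fin d → ℝ =>
      ENNReal.ofReal (A * Real.exp (-(∑ i, (c i - v i) ^ 2) / (2 * θ)))⁻¹ :=
    ((measurable_const.mul
      (Real.measurable_exp.comp (hQmeas.neg.div_const _))).inv).ennreal_ofReal
  have hg_meas : Measurable fun c : Fin d → ℝ =>
      ‖f c‖ₑ ^ ((2 : ENNReal).toReal) :=
    (hf_meas.enorm).pow_const _
  have h2 := hmem.2
  rw [eLpNorm_eq_lintegral_rpow_enorm_toReal (by norm_num) (by norm_num),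
    lintegral_withDensity_eq_lintegral_mul _ hw_meas hg_meas] at h2
  have hptw : ∀ c : Fin d → ℝ,
      ENNReal.ofReal (A * Real.exp (-(∑ i, (c i - v i) ^ 2) / (2 * θ)))⁻¹ *
        ‖f c‖ₑ ^ ((2 : ENNReal).toReal)
      = ENNReal.ofReal A⁻¹ *
        ENNReal.ofReal (f c ^ 2 * Real.exp ((∑ i, (c i - v i) ^ 2) / (2 * θ))) := by
    intro c
    have h1 : ‖f c‖ₑ ^ ((2 : ENNReal).toReal)
        = ENNReal.ofReal (f c ^ 2) := by
      have hcoe : ‖f c‖ₑ = ENNReal.ofReal (f c) := by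
        rw [← ofReal_norm, Real.norm_eq_abs, abs_of_nonneg (hf_nonneg c)]
      rw [show ((2 : ENNReal).toReal) = ((2 : ℕ) : ℝ) by norm_num,
        ENNReal.rpow_natCast, hcoe, ← ENNReal.ofReal_pow (hf_nonneg c)]
    rw [h1, mul_inv, ← Real.exp_neg,
      ENNReal.ofReal_mul (by positivity), mul_assoc, ← ENNReal.ofReal_mul (by positivity)]
    congr 2
    rw [neg_div, neg_neg]
    ring
  simp only [Pi.mul_apply] at h2
  rw [lintegral_congr hptw, lintegral_const_mul _ hint_meas, hmain,
    ENNReal.mul_top (by simp [ENNReal.ofReal_eq_zero, not_le, inv_pos, hApos]),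
    ENNReal.top_rpow_of_pos (by norm_num)] at h2
  exact lt_irrefl _ h2
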